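/- Suppose rank(X) = n. Let θ ∈ ℝ^n and set I = I⁰(θ) and I^c = 𝕀 \ I. If ‖X_{I^c}^⊤ (X X^⊤)^{−1} X‖₁ < 1/2, then θ is the unique minimizer of the ℓ1 problem, i.e., ‖φ(θ)‖₁ < ‖φ(θ')‖₁ for all θ' ≠ θ. -/

import Mathlib

open Matrix Finset

/-- The Gram matrix `X X^⊤` of the regressor matrix `X`. -/
noncomputable def gramX (n N : ℕ) (x : Fin N → Fin n → ℝ) :
    Matrix (Fin n) (Fin n) ℝ :=
  Matrix.of fun i j => ∑ t, x t i * x t j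

lemma isUnit_det_of_rank_eq {k : ℕ} (G : Matrix (Fin k) (Fin k) ℝ) (h : G.rank = k) :
    IsUnit G.det := by
  rw [← Matrix.isUnit_iff_isUnit_det, ← Matrix.mulVec_surjective_iff_isUnit]
  have htop : LinearMap.range G.mulVecLin = ⊤ := by
    apply Submodule.eq_top_of_finrank_eq
    rw [← Matrix.rank, h]
    simp [Module.finrank_fintype_fun_eq_card]
  intro w
  obtain ⟨v, hv⟩ := LinearMap.range_eq_top.mp htop w
  exact ⟨v, hv⟩

/-- If `rank X = n` and the induced 1-norm of
`X_{Iᶜ}^⊤ (X X^⊤)⁻¹ X` (rows indexed by `Iᶜ`, columns by `𝕀`), with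
`I = I⁰(θ)`, is less than `1/2`, then `θ` is the unique minimizer of the ℓ1 problem. -/
theorem stmt9 (n N : ℕ) (hn : 1 ≤ n) (hN : 1 ≤ N)
    (x : Fin N → Fin n → ℝ) (y : Fin N → ℝ)
    (hrank : (Matrix.of fun i t => x t i : Matrix (Fin n) (Fin N) ℝ).rank = n)
    (θ : Fin n → ℝ)
    (hnorm : ∀ c : Fin N,
      ∑ s ∈ (univ.filter (fun t => x t ⬝ᵥ θ = y t))ᶜ,
        |x s ⬝ᵥ ((gramX n N x)⁻¹ *ᵥ x c)| < 1 / 2) :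
    ∀ θ' : Fin n → ℝ, θ' ≠ θ → ∑ t, |y t - x t ⬝ᵥ θ| < ∑ t, |y t - x t ⬝ᵥ θ'| := by
  classical
  intro θ' hne
  set G := gramX n N x with hGdef
  set I : Finset (Fin N) := univ.filter (fun t => x t ⬝ᵥ θ = y t) with hI
  set a : Fin N → ℝ := fun t => x t ⬝ᵥ (θ' - θ) with ha
  -- G is invertible
  have hGmul : G = (Matrix.of fun i t => x t i : Matrix (Fin n) (Fin N) ℝ) *
      (Matrix.of fun i t => x t i : Matrix (Fin n) (Fin N) ℝ)ᵀ := by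
    ext i j
    simp [hGdef, gramX, Matrix.mul_apply]
  have hGrank : G.rank = n := by
    rw [hGmul, Matrix.rank_self_mul_transpose, hrank]
  have hdet : IsUnit G.det := isUnit_det_of_rank_eq G hGrank
  have hinv : G⁻¹ * G = 1 := Matrix.nonsing_inv_mul G hdet
  -- expression of G *ᵥ (θ' - θ)
  have hGd : ∀ i, (G *ᵥ (θ' - θ)) i = ∑ t, a t * x t i := by
    intro i
    simp only [hGdef, gramX, Matrix.mulVec, dotProduct, Matrix.of_apply, ha,
      Finset.sum_mul]
    rw [Finset.sum_comm]
    refine Finset.sum_congr rfl fun t _ => Finset.sum_congr rfl fun j _ => ?_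
    ring
  have hsum : (∑ t, a t • x t) = G *ᵥ (θ' - θ) := by
    funext i
    rw [Finset.sum_apply, hGd i]
    simp
  have hGiG : G⁻¹ *ᵥ (G *ᵥ (θ' - θ)) = θ' - θ := by
    rw [Matrix.mulVec_mulVec, hinv, Matrix.one_mulVec]
  -- key reconstruction identity
  have key : ∀ s, a s = ∑ t, (x s ⬝ᵥ (G⁻¹ *ᵥ x t)) * a t := by
    intro s
    calc a s = x s ⬝ᵥ (θ' - θ) := rfl
    _ = x s ⬝ᵥ (G⁻¹ *ᵥ (∑ t, a t • x t)) := by rw [hsum, hGiG]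
    _ = x s ⬝ᵥ (∑ t, a t • (G⁻¹ *ᵥ x t)) := by
        congr 1
        rw [← Matrix.mulVecLin_apply, map_sum]
        simp [Matrix.mulVecLin_apply]
    _ = ∑ t, (x s ⬝ᵥ (G⁻¹ *ᵥ x t)) * a t := by
        simp only [dotProduct, Finset.sum_apply, Pi.smul_apply, smul_eq_mul,
          Finset.mul_sum, Finset.sum_mul]
        rw [Finset.sum_comm]
        refine Finset.sum_congr rfl fun t _ => Finset.sum_congr rfl fun i _ => ?_
        ring
  -- existence of a nonzero a t
  have hex : ∃ t, a t ≠ 0 := by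
    by_contra h
    push_neg at h
    have h0 : G *ᵥ (θ' - θ) = 0 := by
      funext i
      rw [hGd i]
      simp [h]
    have hd0 : θ' - θ = 0 := by rw [← hGiG, h0, Matrix.mulVec_zero]
    exact hne (sub_eq_zero.mp hd0)
  -- the crucial bound
  have hbound : ∑ s ∈ Iᶜ, |a s| < (1 / 2) * ∑ t, |a t| := by
    obtain ⟨t0, ht0⟩ := hex
    calc ∑ s ∈ Iᶜ, |a s| ≤ ∑ s ∈ Iᶜ, ∑ t, |x s ⬝ᵥ (G⁻¹ *ᵥ x t)| * |a t| := by
          refine Finset.sum_le_sum fun s _ => ?_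
          rw [key s]
          refine le_trans (Finset.abs_sum_le_sum_abs _ _) ?_
          refine le_of_eq (Finset.sum_congr rfl fun t _ => ?_)
          rw [abs_mul]
    _ = ∑ t, (∑ s ∈ Iᶜ, |x s ⬝ᵥ (G⁻¹ *ᵥ x t)|) * |a t| := by
          rw [Finset.sum_comm]
          refine Finset.sum_congr rfl fun t _ => ?_
          rw [Finset.sum_mul]
    _ < ∑ t, (1 / 2) * |a t| := by
          refine Finset.sum_lt_sum (fun t _ =>
            mul_le_mul_of_nonneg_right (le_of_lt (hnorm t)) (abs_nonneg _)) ?_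
          exact ⟨t0, Finset.mem_univ _,
            mul_lt_mul_of_pos_right (hnorm t0) (abs_pos.mpr ht0)⟩
    _ = (1 / 2) * ∑ t, |a t| := by rw [Finset.mul_sum]
  -- errors at θ vanish on I
  have hsplit0 : ∑ t, |y t - x t ⬝ᵥ θ| = ∑ t ∈ Iᶜ, |y t - x t ⬝ᵥ θ| := by
    rw [← Finset.sum_add_sum_compl I]
    have hz : ∑ t ∈ I, |y t - x t ⬝ᵥ θ| = 0 := by
      refine Finset.sum_eq_zero fun t ht => ?_
      have h1 : x t ⬝ᵥ θ = y t := (Finset.mem_filter.mp ht).2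
      rw [h1]
      simp
    rw [hz, zero_add]
  -- pointwise relations for θ'
  have hIa : ∀ t ∈ I, |y t - x t ⬝ᵥ θ'| = |a t| := by
    intro t ht
    have h1 : x t ⬝ᵥ θ = y t := (Finset.mem_filter.mp ht).2
    have h2 : a t = x t ⬝ᵥ θ' - x t ⬝ᵥ θ := by
      simp [ha, dotProduct_sub]
    rw [← abs_neg]
    congr 1
    rw [h2, ← h1]
    ring
  have hIc : ∀ t, |y t - x t ⬝ᵥ θ| - |a t| ≤ |y t - x t ⬝ᵥ θ'| := by
    intro t
    have h2 : y t - x t ⬝ᵥ θ' = (y t - x t ⬝ᵥ θ) - a t := by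
      have : a t = x t ⬝ᵥ θ' - x t ⬝ᵥ θ := by simp [ha, dotProduct_sub]
      rw [this]; ring
    rw [h2]
    exact abs_sub_abs_le_abs_sub _ _
  -- conclusion
  have hsplita : ∑ t ∈ I, |a t| + ∑ t ∈ Iᶜ, |a t| = ∑ t, |a t| :=
    Finset.sum_add_sum_compl I _
  calc ∑ t, |y t - x t ⬝ᵥ θ| = ∑ t ∈ Iᶜ, |y t - x t ⬝ᵥ θ| := hsplit0
  _ < (∑ t, |a t| - 2 * ∑ s ∈ Iᶜ, |a s|) + ∑ t ∈ Iᶜ, |y t - x t ⬝ᵥ θ| := by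
      linarith
  _ = ∑ t ∈ I, |a t| + ∑ t ∈ Iᶜ, (|y t - x t ⬝ᵥ θ| - |a t|) := by
      rw [Finset.sum_sub_distrib]
      linarith
  _ ≤ ∑ t ∈ I, |y t - x t ⬝ᵥ θ'| + ∑ t ∈ Iᶜ, |y t - x t ⬝ᵥ θ'| := by
      refine add_le_add (Finset.sum_le_sum fun t ht => (hIa t ht).ge)
        (Finset.sum_le_sum fun t _ => hIc t)
  _ = ∑ t, |y t - x t ⬝ᵥ θ'| := Finset.sum_add_sum_compl I _
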